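/- Let $\Gamma$ be a $2$-$Y$-homogeneous $(Y,Y')$-distance-biregular graph with $D \ge 3$, $k' \ge 2$ and $c'_2 \ge 2$. Then $\gamma_2 \ge 1$ and $c_3 = \frac{c_2(c'_2-1)}{\gamma_2} + 1$. -/

import Mathlib

open SimpleGraph Set

/-- A `(Y,Y')`-distance-biregular graph: a finite connected bipartite graph in which
every vertex is distance-regularized, and vertices in the same color class share the
same intersection numbers (`c`, `b` for class `Y` and `c'`, `b'` for class `Y'`),
while the two color classes have different intersection arrays.
`D` (resp. `D'`) is the common eccentricity of vertices in `Y` (resp. `Y'`). -/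
structure DBRG (V : Type) [Fintype V] where
  G : SimpleGraph V
  conn : G.Connected
  Y : Finset V
  Y' : Finset V
  Yne : Y.Nonempty
  Y'ne : Y'.Nonempty
  cover : ∀ v, v ∈ Y ∨ v ∈ Y'
  disj : ∀ v, ¬(v ∈ Y ∧ v ∈ Y')
  bip : ∀ u v, G.Adj u v → (u ∈ Y ↔ v ∈ Y')
  D : ℕ
  D' : ℕ
  eccY : ∀ x ∈ Y, (∃ y, G.dist x y = D) ∧ ∀ y, G.dist x y ≤ D
  eccY' : ∀ x ∈ Y', (∃ y, G.dist x y = D') ∧ ∀ y, G.dist x y ≤ D'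
  c : ℕ → ℕ
  b : ℕ → ℕ
  c' : ℕ → ℕ
  b' : ℕ → ℕ
  hc : ∀ i, 1 ≤ i → ∀ x ∈ Y, ∀ z, G.dist x z = i →
    {w | G.Adj z w ∧ G.dist x w = i - 1}.ncard = c i
  hb : ∀ i, ∀ x ∈ Y, ∀ z, G.dist x z = i →
    {w | G.Adj z w ∧ G.dist x w = i + 1}.ncard = b i
  hc' : ∀ i, 1 ≤ i → ∀ x ∈ Y', ∀ z, G.dist x z = i →
    {w | G.Adj z w ∧ G.dist x w = i - 1}.ncard = c' i
  hb' : ∀ i, ∀ x ∈ Y', ∀ z, G.dist x z = i →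
    {w | G.Adj z w ∧ G.dist x w = i + 1}.ncard = b' i
  c0 : c 0 = 0
  c'0 : c' 0 = 0
  nonreg : ¬ (∀ i, c i = c' i ∧ b i = b' i)

/-- `Γ` is `2`-`Y`-homogeneous with parameters `γ i`: for all `1 ≤ i ≤ D - 1` and all
`x ∈ Y`, `y ∈ Γ₂(x)`, `z ∈ Γ_{i,i}(x,y)`, the number of common neighbours of `x` and `y`
at distance `i - 1` from `z` equals `γ i` (independently of `x`, `y`, `z`). -/
def DBRG.TwoYHom {V : Type} [Fintype V] (Γ : DBRG V) (γ : ℕ → ℕ) : Prop :=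
  ∀ i, 1 ≤ i → i ≤ Γ.D - 1 → ∀ x ∈ Γ.Y, ∀ y, Γ.G.dist x y = 2 →
    ∀ z, Γ.G.dist x z = i → Γ.G.dist y z = i →
      {w | Γ.G.dist z w = i - 1 ∧ Γ.G.Adj x w ∧ Γ.G.Adj y w}.ncard = γ i
private lemma exists_on_geodesic {V : Type} {G : SimpleGraph V} (hconn : G.Connected)
    (x y : V) : ∀ k, k ≤ G.dist x y →
    ∃ u, G.dist x u = k ∧ G.dist u y = G.dist x y - k := by
  intro k
  induction k with
  | zero => intro _; exact ⟨x, by simp [SimpleGraph.dist_self]⟩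
  | succ k ih =>
    intro hk
    obtain ⟨u, hxu, huy⟩ := ih (by omega)
    have h1 : G.dist u y ≠ 0 := by omega
    obtain ⟨p, hp⟩ := exists_walk_of_dist_ne_zero h1
    cases p with
    | nil => simp at hp; omega
    | @cons _ u' _ hadj q =>
      have hq : G.dist u' y ≤ G.dist u y - 1 := by
        have := SimpleGraph.dist_le q
        simp [SimpleGraph.Walk.length_cons] at hp
        omega
      have h3 : G.dist x u' ≤ k + 1 := by
        have := hconn.dist_triangle (u := x) (v := u) (w := u')
        have h4 : G.dist u u' = 1 := SimpleGraph.dist_eq_one_iff_adj.mpr hadj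
        omega
      have h4 : G.dist x y ≤ G.dist x u' + G.dist u' y := hconn.dist_triangle
      exact ⟨u', by omega, by omega⟩

private lemma ncard_eq_filter_card {V : Type} [Fintype V] (s : Set V) (p : V → Prop)
    [DecidablePred p] (h : ∀ a, a ∈ s ↔ p a) :
    s.ncard = (Finset.univ.filter p).card := by
  rw [show s = ↑(Finset.univ.filter p) from Set.ext (by simp [h])]
  exact Set.ncard_coe_finset _

theorem stmt_15 {V : Type} [Fintype V] (Γ : DBRG V) (hD : 3 ≤ Γ.D)
    (γ : ℕ → ℕ) (hhom : Γ.TwoYHom γ) (hk' : 2 ≤ Γ.b' 0) (hc2' : 2 ≤ Γ.c' 2) :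
    1 ≤ γ 2 ∧ (Γ.c 3 : ℚ) = (Γ.c 2 : ℚ) * ((Γ.c' 2 : ℚ) - 1) / (γ 2 : ℚ) + 1 := by
  classical
  obtain ⟨x, hxY⟩ := Γ.Yne
  obtain ⟨⟨t, ht⟩, -⟩ := Γ.eccY x hxY
  obtain ⟨u, hxu, -⟩ := exists_on_geodesic Γ.conn x t 3 (by omega)
  obtain ⟨y, hxy, hyu'⟩ := exists_on_geodesic Γ.conn x u 2 (by omega)
  have hyu1 : Γ.G.dist y u = 1 := by omega
  have hAyu : Γ.G.Adj y u := SimpleGraph.dist_eq_one_iff_adj.mp hyu1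
  -- every vertex at distance 2 from x is in Y
  have hY2 : ∀ v, Γ.G.dist x v = 2 → v ∈ Γ.Y := by
    intro v hv
    obtain ⟨m, hm1, hm2⟩ := exists_on_geodesic Γ.conn x v 1 (by omega)
    have hAxm : Γ.G.Adj x m := SimpleGraph.dist_eq_one_iff_adj.mp hm1
    have hAmv : Γ.G.Adj m v := SimpleGraph.dist_eq_one_iff_adj.mp (by omega)
    have hmY' : m ∈ Γ.Y' := (Γ.bip x m hAxm).mp hxY
    have hmY : m ∉ Γ.Y := fun h => Γ.disj m ⟨h, hmY'⟩
    have : v ∉ Γ.Y' := fun h => hmY ((Γ.bip m v hAmv).mpr h)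
    exact (Γ.cover v).resolve_right this
  have hyY : y ∈ Γ.Y := hY2 y hxy
  -- a common neighbour of x and y exists
  obtain ⟨m, hm1, hm2⟩ := exists_on_geodesic Γ.conn x y 1 (by omega)
  have hAxm : Γ.G.Adj x m := SimpleGraph.dist_eq_one_iff_adj.mp hm1
  have hAym : Γ.G.Adj y m := (SimpleGraph.dist_eq_one_iff_adj.mp (by omega)).symm
  -- dist y z = 2 for z ∈ Z
  have hdyz : ∀ z, Γ.G.Adj u z → Γ.G.dist x z = 2 → z ≠ y → Γ.G.dist y z = 2 := by
    intro z hz1 hz2 hz3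
    have hzY : z ∈ Γ.Y := hY2 z hz2
    have hle : Γ.G.dist y z ≤ 2 := by
      have := Γ.conn.dist_triangle (u := y) (v := u) (w := z)
      have huz : Γ.G.dist u z = 1 := SimpleGraph.dist_eq_one_iff_adj.mpr hz1
      omega
    have h0 : Γ.G.dist y z ≠ 0 :=
      fun h => hz3 ((Γ.conn.dist_eq_zero_iff).mp h).symm
    have h1 : Γ.G.dist y z ≠ 1 := by
      intro h
      have hAdj := SimpleGraph.dist_eq_one_iff_adj.mp h
      exact Γ.disj z ⟨hzY, (Γ.bip y z hAdj).mp hyY⟩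
    omega
  -- dist w u = 2 and w ∈ Y' for w a common neighbour of x and y
  have hwu : ∀ w, Γ.G.Adj x w → Γ.G.Adj y w → Γ.G.dist w u = 2 := by
    intro w hw1 hw2
    have hxw : Γ.G.dist x w = 1 := SimpleGraph.dist_eq_one_iff_adj.mpr hw1
    have hle : Γ.G.dist w u ≤ 2 := by
      have := Γ.conn.dist_triangle (u := w) (v := y) (w := u)
      have h1 : Γ.G.dist w y = 1 := SimpleGraph.dist_eq_one_iff_adj.mpr hw2.symm
      omega
    have h0 : Γ.G.dist w u ≠ 0 := by
      intro h
      have hwu0 := (Γ.conn.dist_eq_zero_iff).mp h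
      rw [hwu0] at hxw
      omega
    have h1 : Γ.G.dist w u ≠ 1 := by
      intro h
      have := Γ.conn.dist_triangle (u := x) (v := w) (w := u)
      omega
    omega
  -- the three finsets
  set Z : Finset V := Finset.univ.filter
    (fun z => Γ.G.Adj u z ∧ Γ.G.dist x z = 2 ∧ z ≠ y) with hZdef
  set W : Finset V := Finset.univ.filter
    (fun w => Γ.G.Adj x w ∧ Γ.G.Adj y w) with hWdef
  set P : Finset (V × V) := Finset.univ.filter
    (fun p => Γ.G.Adj u p.1 ∧ Γ.G.dist x p.1 = 2 ∧ p.1 ≠ y ∧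
      Γ.G.Adj x p.2 ∧ Γ.G.Adj y p.2 ∧ Γ.G.Adj p.1 p.2) with hPdef
  -- card of W
  have hWcard : W.card = Γ.c 2 := by
    have h : {w | Γ.G.Adj y w ∧ Γ.G.dist x w = 1}.ncard = Γ.c 2 :=
      Γ.hc 2 one_le_two x hxY y hxy
    rw [ncard_eq_filter_card _ (fun w => Γ.G.Adj x w ∧ Γ.G.Adj y w) (fun a => by
      simp only [Set.mem_setOf_eq]
      constructor
      · rintro ⟨h1, h2⟩
        exact ⟨SimpleGraph.dist_eq_one_iff_adj.mp h2, h1⟩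
      · rintro ⟨h1, h2⟩
        exact ⟨h2, SimpleGraph.dist_eq_one_iff_adj.mpr h1⟩)] at h
    exact h
  -- card of Z
  have hZf : (Finset.univ.filter (fun z => Γ.G.Adj u z ∧ Γ.G.dist x z = 2)).card = Γ.c 3 := by
    have h : {w | Γ.G.Adj u w ∧ Γ.G.dist x w = 2}.ncard = Γ.c 3 :=
      Γ.hc 3 (by norm_num) x hxY u hxu
    rw [ncard_eq_filter_card _ (fun z => Γ.G.Adj u z ∧ Γ.G.dist x z = 2)
      (fun a => by simp)] at h
    exact h
  have hymem : y ∈ Finset.univ.filter (fun z => Γ.G.Adj u z ∧ Γ.G.dist x z = 2) := by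
    simp [hAyu.symm, hxy]
  have hZerase : Z = (Finset.univ.filter (fun z => Γ.G.Adj u z ∧ Γ.G.dist x z = 2)).erase y := by
    ext a
    simp only [hZdef, Finset.mem_filter, Finset.mem_erase, Finset.mem_univ, true_and]
    tauto
  have hc3pos : 1 ≤ Γ.c 3 := by
    rw [← hZf]
    exact Finset.card_pos.mpr ⟨y, hymem⟩
  have hZcard : Z.card = Γ.c 3 - 1 := by
    rw [hZerase, Finset.card_erase_of_mem hymem, hZf]
  -- fibers over Z have γ 2 elements
  have hfibZ : ∀ z ∈ Z,
      (Finset.univ.filter (fun w => Γ.G.Adj x w ∧ Γ.G.Adj y w ∧ Γ.G.Adj z w)).card = γ 2 := by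
    intro z hz
    rw [hZdef, Finset.mem_filter] at hz
    obtain ⟨-, hz1, hz2, hz3⟩ := hz
    have h : {w | Γ.G.dist z w = 1 ∧ Γ.G.Adj x w ∧ Γ.G.Adj y w}.ncard = γ 2 :=
      hhom 2 one_le_two (by omega) x hxY y hxy z hz2 (hdyz z hz1 hz2 hz3)
    rw [ncard_eq_filter_card _ (fun w => Γ.G.Adj x w ∧ Γ.G.Adj y w ∧ Γ.G.Adj z w) (fun a => by
      simp only [Set.mem_setOf_eq]
      constructor
      · rintro ⟨h1, h2, h3⟩
        exact ⟨h2, h3, SimpleGraph.dist_eq_one_iff_adj.mp h1⟩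
      · rintro ⟨h1, h2, h3⟩
        exact ⟨SimpleGraph.dist_eq_one_iff_adj.mpr h3, h1, h2⟩)] at h
    exact h
  have hc'pos : 1 ≤ Γ.c' 2 := by omega
  -- fibers over W have c' 2 - 1 elements
  have hfibW : ∀ w ∈ W,
      (Finset.univ.filter (fun z => Γ.G.Adj u z ∧ Γ.G.dist x z = 2 ∧ z ≠ y ∧ Γ.G.Adj z w)).card
        = Γ.c' 2 - 1 := by
    intro w hw
    rw [hWdef, Finset.mem_filter] at hw
    obtain ⟨-, hw1, hw2⟩ := hw
    have hwY' : w ∈ Γ.Y' := (Γ.bip x w hw1).mp hxY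
    have hS : (Finset.univ.filter (fun z => Γ.G.Adj u z ∧ Γ.G.dist w z = 1)).card = Γ.c' 2 := by
      have h : {z | Γ.G.Adj u z ∧ Γ.G.dist w z = 1}.ncard = Γ.c' 2 :=
        Γ.hc' 2 one_le_two w hwY' u (hwu w hw1 hw2)
      rw [ncard_eq_filter_card _ (fun z => Γ.G.Adj u z ∧ Γ.G.dist w z = 1)
        (fun a => by simp)] at h
      exact h
    have hymemS : y ∈ Finset.univ.filter (fun z => Γ.G.Adj u z ∧ Γ.G.dist w z = 1) := by
      simp only [Finset.mem_filter, Finset.mem_univ, true_and]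
      exact ⟨hAyu.symm, SimpleGraph.dist_eq_one_iff_adj.mpr hw2.symm⟩
    have heq : Finset.univ.filter
        (fun z => Γ.G.Adj u z ∧ Γ.G.dist x z = 2 ∧ z ≠ y ∧ Γ.G.Adj z w)
        = (Finset.univ.filter (fun z => Γ.G.Adj u z ∧ Γ.G.dist w z = 1)).erase y := by
      ext a
      simp only [Finset.mem_filter, Finset.mem_erase, Finset.mem_univ, true_and]
      constructor
      · rintro ⟨h1, h2, h3, h4⟩
        exact ⟨h3, h1, SimpleGraph.dist_eq_one_iff_adj.mpr h4.symm⟩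
      · rintro ⟨h1, h2, h3⟩
        have hwa : Γ.G.Adj w a := SimpleGraph.dist_eq_one_iff_adj.mp h3
        refine ⟨h2, ?_, h1, hwa.symm⟩
        have hxw : Γ.G.dist x w = 1 := SimpleGraph.dist_eq_one_iff_adj.mpr hw1
        have hle : Γ.G.dist x a ≤ 2 := by
          have := Γ.conn.dist_triangle (u := x) (v := w) (w := a)
          omega
        have h0 : Γ.G.dist x a ≠ 0 := by
          intro hh
          have h := (Γ.conn.dist_eq_zero_iff).mp hh
          subst h
          have : Γ.G.dist x u = 1 := SimpleGraph.dist_eq_one_iff_adj.mpr h2.symm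
          omega
        have h5 : Γ.G.dist x a ≠ 1 := by
          intro h
          have hAdj : Γ.G.Adj x a := SimpleGraph.dist_eq_one_iff_adj.mp h
          have hau : Γ.G.dist a u = 1 := SimpleGraph.dist_eq_one_iff_adj.mpr h2.symm
          have := Γ.conn.dist_triangle (u := x) (v := a) (w := u)
          omega
        omega
    rw [heq, Finset.card_erase_of_mem hymemS, hS]
  -- double counting
  have hPZ : P.card = Z.card * γ 2 := by
    rw [Finset.card_eq_sum_card_fiberwise (f := Prod.fst) (t := Z)
      (fun p hp => by
        rw [hPdef, Finset.mem_coe, Finset.mem_filter] at hp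
        rw [hZdef, Finset.mem_coe, Finset.mem_filter]
        exact ⟨Finset.mem_univ _, hp.2.1, hp.2.2.1, hp.2.2.2.1⟩)]
    rw [Finset.sum_congr rfl (fun z hz => ?_), Finset.sum_const, smul_eq_mul]
    rw [← hfibZ z hz]
    have himg : P.filter (fun p => p.1 = z)
        = (Finset.univ.filter (fun w => Γ.G.Adj x w ∧ Γ.G.Adj y w ∧ Γ.G.Adj z w)).image
          (fun w => (z, w)) := by
      rw [hZdef, Finset.mem_filter] at hz
      obtain ⟨-, hz1, hz2, hz3⟩ := hz
      ext ⟨a, b⟩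
      simp only [hPdef, Finset.mem_filter, Finset.mem_image, Finset.mem_univ, true_and,
        Prod.mk.injEq]
      constructor
      · rintro ⟨⟨g1, g2, g3, g4, g5, g6⟩, g7⟩
        subst g7
        exact ⟨b, ⟨g4, g5, g6⟩, rfl, rfl⟩
      · rintro ⟨w, ⟨g1, g2, g3⟩, g4, g5⟩
        subst g4; subst g5
        exact ⟨⟨hz1, hz2, hz3, g1, g2, g3⟩, rfl⟩
    rw [himg, Finset.card_image_of_injective _ (fun a b h => congrArg Prod.snd h)]
  have hPW : P.card = W.card * (Γ.c' 2 - 1) := by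
    rw [Finset.card_eq_sum_card_fiberwise (f := Prod.snd) (t := W)
      (fun p hp => by
        rw [hPdef, Finset.mem_coe, Finset.mem_filter] at hp
        rw [hWdef, Finset.mem_coe, Finset.mem_filter]
        exact ⟨Finset.mem_univ _, hp.2.2.2.2.1, hp.2.2.2.2.2.1⟩)]
    rw [Finset.sum_congr rfl (fun w hw => ?_), Finset.sum_const, smul_eq_mul]
    rw [← hfibW w hw]
    have himg : P.filter (fun p => p.2 = w)
        = (Finset.univ.filter
            (fun z => Γ.G.Adj u z ∧ Γ.G.dist x z = 2 ∧ z ≠ y ∧ Γ.G.Adj z w)).image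
          (fun z => (z, w)) := by
      rw [hWdef, Finset.mem_filter] at hw
      obtain ⟨-, hw1, hw2⟩ := hw
      ext ⟨a, b⟩
      simp only [hPdef, Finset.mem_filter, Finset.mem_image, Finset.mem_univ, true_and,
        Prod.mk.injEq]
      constructor
      · rintro ⟨⟨g1, g2, g3, g4, g5, g6⟩, g7⟩
        subst g7
        exact ⟨a, ⟨g1, g2, g3, g6⟩, rfl, rfl⟩
      · rintro ⟨z, ⟨g1, g2, g3, g4⟩, g5, g6⟩
        subst g5; subst g6
        exact ⟨⟨g1, g2, g3, hw1, hw2, g4⟩, rfl⟩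
    rw [himg, Finset.card_image_of_injective _ (fun a b h => congrArg Prod.fst h)]
  have key : (Γ.c 3 - 1) * γ 2 = Γ.c 2 * (Γ.c' 2 - 1) := by
    rw [← hZcard, ← hWcard, ← hPZ, ← hPW]
  have hc2pos : 1 ≤ Γ.c 2 := by
    rw [← hWcard]
    refine Finset.card_pos.mpr ⟨m, ?_⟩
    rw [hWdef, Finset.mem_filter]
    exact ⟨Finset.mem_univ _, hAxm, hAym⟩
  have hγpos : 1 ≤ γ 2 := by
    by_contra h
    have hγ0 : γ 2 = 0 := by omega
    rw [hγ0, Nat.mul_zero] at key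
    have : Γ.c 2 * (Γ.c' 2 - 1) ≥ 1 * 1 := Nat.mul_le_mul hc2pos (by omega)
    omega
  have hc3ge2 : 2 ≤ Γ.c 3 := by
    by_contra h
    have : Γ.c 3 - 1 = 0 := by omega
    rw [this, Nat.zero_mul] at key
    have : Γ.c 2 * (Γ.c' 2 - 1) ≥ 1 * 1 := Nat.mul_le_mul hc2pos (by omega)
    omega
  refine ⟨hγpos, ?_⟩
  have e3 : ((Γ.c 3 - 1 : ℕ) : ℚ) = (Γ.c 3 : ℚ) - 1 := by
    have := Nat.cast_sub (R := ℚ) (show 1 ≤ Γ.c 3 by omega)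
    simpa using this
  have e2' : ((Γ.c' 2 - 1 : ℕ) : ℚ) = (Γ.c' 2 : ℚ) - 1 := by
    have := Nat.cast_sub (R := ℚ) hc'pos
    simpa using this
  have key' : ((Γ.c 3 : ℚ) - 1) * (γ 2 : ℚ) = (Γ.c 2 : ℚ) * ((Γ.c' 2 : ℚ) - 1) := by
    rw [← e3, ← e2', ← Nat.cast_mul, ← Nat.cast_mul, key]
  have hγ0 : (γ 2 : ℚ) ≠ 0 := Nat.cast_ne_zero.mpr (by omega)
  field_simp
  linear_combination key'
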